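/- arXiv:1811.04635 — 2 statements merged into one kernel-verified Lean document; each statement's English description precedes it below -/
import Mathlib

section
/- Let h_k = η_k·h̄_k + γ_k·U_k(ω̃_k ⊙ z_k) and h_ℓ = η_ℓ·h̄_ℓ + γ_ℓ·U_ℓ(ω̃_ℓ ⊙ z_ℓ) be two independent M-dimensional Weichselberger Ricean channel vectors (z_k and z_ℓ independent of each other). Then E[|h_kᴴ h_ℓ|²] = η_k²η_ℓ²·|h̄_kᴴh̄_ℓ|² + γ_k²γ_ℓ²·tr(Q_k Q_ℓ) + η_k²γ_ℓ²·(h̄_kᴴ Q_ℓ h̄_k) + γ_k²η_ℓ²·(h̄_ℓᴴ Q_k h̄_ℓ), where Q_j = U_j diag(ω_j) U_jᴴ for j ∈ {k, ℓ}. -/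
open MeasureTheory ProbabilityTheory Matrix Finset
open ComplexConjugate

section Aux

private lemma memLp_conj' {Ω : Type*} [MeasurableSpace Ω] {μ : Measure Ω} {f : Ω → ℂ}
    {p : ENNReal} (hf : MemLp f p μ) : MemLp (fun x => conj (f x)) p μ := by
  refine MemLp.of_le hf ((Complex.continuous_conj).comp_aestronglyMeasurable hf.1) ?_
  filter_upwards with x
  simp

private lemma memLp_two_mul' {Ω : Type*} [MeasurableSpace Ω] {μ : Measure Ω} {f g : Ω → ℂ}
    (hf : MemLp f 4 μ) (hg : MemLp g 4 μ) : MemLp (fun x => f x * g x) 2 μ := by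
  have h : (1 : ENNReal)/2 = 1/4 + 1/4 := by
    simp only [one_div]
    rw [← two_mul, show (4:ENNReal) = 2*2 by norm_num,
      ENNReal.mul_inv (Or.inl (by norm_num)) (Or.inl (by norm_num)),
      ← mul_assoc, ENNReal.mul_inv_cancel (by norm_num) (by norm_num), one_mul]
  have hH : ENNReal.HolderTriple 4 4 2 := ⟨by simpa only [one_div] using h.symm⟩
  have := hg.smul hf (r := 2)
  exact (by simpa [Pi.smul_apply, smul_eq_mul] using this : MemLp (f * g) 2 μ)

private lemma integrable_mul_of_memLp_two' {Ω : Type*} [MeasurableSpace Ω] {μ : Measure Ω}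
    {f g : Ω → ℂ} (hf : MemLp f 2 μ) (hg : MemLp g 2 μ) :
    Integrable (fun x => f x * g x) μ := by
  have h : (1 : ENNReal)/1 = 1/2 + 1/2 := by
    simp only [one_div, inv_one]
    rw [ENNReal.inv_two_add_inv_two]
  have hH : ENNReal.HolderTriple 2 2 1 := ⟨by simpa only [one_div] using h.symm⟩
  have := hg.smul hf (r := 1)
  exact memLp_one_iff_integrable.mp (by simpa [Pi.smul_apply, smul_eq_mul] using this : MemLp (f * g) 1 μ)

private lemma indepFun_integral_mul_complex' {Ω : Type*} [MeasurableSpace Ω] {μ : Measure Ω}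
    {X Y : Ω → ℂ} (h : IndepFun X Y μ) (hX : Integrable X μ) (hY : Integrable Y μ) :
    ∫ x, X x * Y x ∂μ = (∫ x, X x ∂μ) * ∫ x, Y x ∂μ := by
  have hXr : Integrable (fun x => (X x).re) μ := Complex.reCLM.integrable_comp hX
  have hXi : Integrable (fun x => (X x).im) μ := Complex.imCLM.integrable_comp hX
  have hYr : Integrable (fun x => (Y x).re) μ := Complex.reCLM.integrable_comp hY
  have hYi : Integrable (fun x => (Y x).im) μ := Complex.imCLM.integrable_comp hY
  have irr : IndepFun (fun x => (X x).re) (fun x => (Y x).re) μ :=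
    h.comp Complex.measurable_re Complex.measurable_re
  have iri : IndepFun (fun x => (X x).re) (fun x => (Y x).im) μ :=
    h.comp Complex.measurable_re Complex.measurable_im
  have iir : IndepFun (fun x => (X x).im) (fun x => (Y x).re) μ :=
    h.comp Complex.measurable_im Complex.measurable_re
  have iii : IndepFun (fun x => (X x).im) (fun x => (Y x).im) μ :=
    h.comp Complex.measurable_im Complex.measurable_im
  have mrr : Integrable (fun x => (X x).re * (Y x).re) μ := irr.integrable_mul hXr hYr
  have mri : Integrable (fun x => (X x).re * (Y x).im) μ := iri.integrable_mul hXr hYi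
  have mir : Integrable (fun x => (X x).im * (Y x).re) μ := iir.integrable_mul hXi hYr
  have mii : Integrable (fun x => (X x).im * (Y x).im) μ := iii.integrable_mul hXi hYi
  have decomp : ∀ (f : Ω → ℂ), Integrable (fun x => (f x).re) μ →
      Integrable (fun x => (f x).im) μ →
      ∫ x, f x ∂μ = ((∫ x, (f x).re ∂μ : ℝ) : ℂ) + ((∫ x, (f x).im ∂μ : ℝ) : ℂ) * Complex.I := by
    intro f hr hi
    have e : ∫ x, f x ∂μ = ∫ x, (((f x).re : ℂ) + ((f x).im : ℂ) * Complex.I) ∂μ := by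
      apply integral_congr_ae; filter_upwards with x; exact (Complex.re_add_im _).symm
    have h1 : Integrable (fun x => ((f x).re : ℂ)) μ := hr.ofReal
    have h2 : Integrable (fun x => ((f x).im : ℂ) * Complex.I) μ := hi.ofReal.mul_const _
    have h3 : ∫ x, ((f x).im : ℂ) * Complex.I ∂μ
        = ((∫ x, (f x).im ∂μ : ℝ) : ℂ) * Complex.I := by
      simp_rw [← smul_eq_mul, integral_smul_const]
      congr 1
      exact integral_ofReal
    have h4 : ∫ x, ((f x).re : ℂ) ∂μ = ((∫ x, (f x).re ∂μ : ℝ) : ℂ) := integral_ofReal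
    rw [e, integral_add h1 h2, h3, h4]
  have hXYre : Integrable (fun x => (X x * Y x).re) μ := by
    have e : (fun x => (X x * Y x).re)
        = fun x => (X x).re * (Y x).re - (X x).im * (Y x).im := by
      funext x; exact Complex.mul_re _ _
    rw [e]; exact mrr.sub mii
  have hXYim : Integrable (fun x => (X x * Y x).im) μ := by
    have e : (fun x => (X x * Y x).im)
        = fun x => (X x).re * (Y x).im + (X x).im * (Y x).re := by
      funext x; exact Complex.mul_im _ _
    rw [e]; exact mri.add mir
  have frr : ∫ x, (X x).re * (Y x).re ∂μ = (∫ x, (X x).re ∂μ) * ∫ x, (Y x).re ∂μ :=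
    irr.integral_fun_mul_eq_mul_integral hXr.1 hYr.1
  have fri : ∫ x, (X x).re * (Y x).im ∂μ = (∫ x, (X x).re ∂μ) * ∫ x, (Y x).im ∂μ :=
    iri.integral_fun_mul_eq_mul_integral hXr.1 hYi.1
  have fir : ∫ x, (X x).im * (Y x).re ∂μ = (∫ x, (X x).im ∂μ) * ∫ x, (Y x).re ∂μ :=
    iir.integral_fun_mul_eq_mul_integral hXi.1 hYr.1
  have fii : ∫ x, (X x).im * (Y x).im ∂μ = (∫ x, (X x).im ∂μ) * ∫ x, (Y x).im ∂μ :=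
    iii.integral_fun_mul_eq_mul_integral hXi.1 hYi.1
  rw [decomp _ hXYre hXYim, decomp X hXr hXi, decomp Y hYr hYi]
  have ere : ∫ x, (X x * Y x).re ∂μ
      = (∫ x, (X x).re ∂μ) * (∫ x, (Y x).re ∂μ) - (∫ x, (X x).im ∂μ) * (∫ x, (Y x).im ∂μ) := by
    have e : ∫ x, (X x * Y x).re ∂μ
        = ∫ x, ((X x).re * (Y x).re - (X x).im * (Y x).im) ∂μ := by
      apply integral_congr_ae; filter_upwards with x; exact Complex.mul_re _ _
    rw [e, integral_sub mrr mii, frr, fii]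
  have eim : ∫ x, (X x * Y x).im ∂μ
      = (∫ x, (X x).re ∂μ) * (∫ x, (Y x).im ∂μ) + (∫ x, (X x).im ∂μ) * (∫ x, (Y x).re ∂μ) := by
    have e : ∫ x, (X x * Y x).im ∂μ
        = ∫ x, ((X x).re * (Y x).im + (X x).im * (Y x).re) ∂μ := by
      apply integral_congr_ae; filter_upwards with x; exact Complex.mul_im _ _
    rw [e, integral_add mri mir, fri, fir]
  rw [ere, eim]
  simp only [Complex.ext_iff, Complex.add_re, Complex.add_im, Complex.ofReal_re,
    Complex.ofReal_im, Complex.mul_re, Complex.mul_im, Complex.I_re, Complex.I_im,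
    Complex.mul_I_re, Complex.mul_I_im]
  constructor <;> ring

private lemma sum_swap3 {M : ℕ} (f : Fin M → Fin M → Fin M → ℂ) :
    ∑ i, ∑ j, ∑ n, f i j n = ∑ n, ∑ i, ∑ j, f i j n := by
  calc ∑ i, ∑ j, ∑ n, f i j n
      = ∑ i, ∑ n, ∑ j, f i j n :=
        Finset.sum_congr rfl fun i _ => Finset.sum_comm
    _ = ∑ n, ∑ i, ∑ j, f i j n := Finset.sum_comm

private lemma sum_swap4 {M : ℕ} (f : Fin M → Fin M → Fin M → Fin M → ℂ) :
    ∑ i, ∑ j, ∑ m, ∑ n, f i j m n = ∑ m, ∑ n, ∑ i, ∑ j, f i j m n := by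
  calc ∑ i, ∑ j, ∑ m, ∑ n, f i j m n
      = ∑ i, ∑ m, ∑ j, ∑ n, f i j m n :=
        Finset.sum_congr rfl fun i _ => Finset.sum_comm
    _ = ∑ m, ∑ i, ∑ j, ∑ n, f i j m n := Finset.sum_comm
    _ = ∑ m, ∑ i, ∑ n, ∑ j, f i j m n :=
        Finset.sum_congr rfl fun m _ =>
          Finset.sum_congr rfl fun i _ => Finset.sum_comm
    _ = ∑ m, ∑ n, ∑ i, ∑ j, f i j m n :=
        Finset.sum_congr rfl fun m _ => Finset.sum_comm

end Aux

/-- Proposition 2, eq. (5): for two independent Weichselberger Ricean channels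
`h_k`, `h_ℓ`, we have
`E[|h_kᴴh_ℓ|²] = η_k²η_ℓ²|h̄_kᴴh̄_ℓ|² + γ_k²γ_ℓ² tr(Q_kQ_ℓ)
  + η_k²γ_ℓ² h̄_kᴴQ_ℓh̄_k + γ_k²η_ℓ² h̄_ℓᴴQ_kh̄_ℓ`. -/
theorem weichselberger_interference_moment
    {Ω : Type*} [MeasurableSpace Ω] {μ : Measure Ω} [IsProbabilityMeasure μ]
    (M : ℕ) (hbark hbarl : Fin M → ℂ) (ηk γk ηl γl : ℝ)
    (Uk Ul : Matrix (Fin M) (Fin M) ℂ) (ωk ωl : Fin M → ℝ)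
    (zk zl : Ω → Fin M → ℂ)
    (hbark_norm : ∑ i, ‖hbark i‖ ^ 2 = (M : ℝ))
    (hbarl_norm : ∑ i, ‖hbarl i‖ ^ 2 = (M : ℝ))
    (hηk : 0 ≤ ηk) (hγk : 0 ≤ γk) (hηγk : ηk ^ 2 + γk ^ 2 = 1)
    (hηl : 0 ≤ ηl) (hγl : 0 ≤ γl) (hηγl : ηl ^ 2 + γl ^ 2 = 1)
    (hUk : Uk ∈ Matrix.unitaryGroup (Fin M) ℂ)
    (hUl : Ul ∈ Matrix.unitaryGroup (Fin M) ℂ)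
    (hωk_nonneg : ∀ m, 0 ≤ ωk m) (hωk_sum : ∑ m, ωk m = (M : ℝ))
    (hωl_nonneg : ∀ m, 0 ≤ ωl m) (hωl_sum : ∑ m, ωl m = (M : ℝ))
    (hzk_meas : ∀ m, Measurable fun x => zk x m)
    (hzl_meas : ∀ m, Measurable fun x => zl x m)
    -- all 2M entries (of z_k together with z_ℓ) are mutually independent
    (hz_indep : iIndepFun
      (Sum.elim (fun m x => zk x m) (fun m x => zl x m) :
        Fin M ⊕ Fin M → Ω → ℂ) μ)
    (hzk_L4 : ∀ m, MemLp (fun x => zk x m) 4 μ)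
    (hzl_L4 : ∀ m, MemLp (fun x => zl x m) 4 μ)
    (hzk_mean : ∀ m, ∫ x, zk x m ∂μ = 0)
    (hzl_mean : ∀ m, ∫ x, zl x m ∂μ = 0)
    (hzk_sq : ∀ m, ∫ x, (zk x m) ^ 2 ∂μ = 0)
    (hzl_sq : ∀ m, ∫ x, (zl x m) ^ 2 ∂μ = 0)
    (hzk_abs2 : ∀ m, ∫ x, ‖zk x m‖ ^ 2 ∂μ = 1)
    (hzl_abs2 : ∀ m, ∫ x, ‖zl x m‖ ^ 2 ∂μ = 1)
    (hzk_abs4 : ∀ m, ∫ x, ‖zk x m‖ ^ 4 ∂μ = 2)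
    (hzl_abs4 : ∀ m, ∫ x, ‖zl x m‖ ^ 4 ∂μ = 2)
    (hk hl : Ω → Fin M → ℂ)
    (hhk : ∀ x, hk x = fun i =>
      (ηk : ℂ) * hbark i
        + (γk : ℂ) * (Uk.mulVec fun m => (Real.sqrt (ωk m) : ℂ) * zk x m) i)
    (hhl : ∀ x, hl x = fun i =>
      (ηl : ℂ) * hbarl i
        + (γl : ℂ) * (Ul.mulVec fun m => (Real.sqrt (ωl m) : ℂ) * zl x m) i)
    (Qk Ql : Matrix (Fin M) (Fin M) ℂ)
    (hQk : Qk = Uk * Matrix.diagonal (fun m => (ωk m : ℂ)) * Ukᴴ)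
    (hQl : Ql = Ul * Matrix.diagonal (fun m => (ωl m : ℂ)) * Ulᴴ) :
    ((∫ x, ‖∑ i, star (hk x i) * hl x i‖ ^ 2 ∂μ : ℝ) : ℂ)
      = (ηk : ℂ) ^ 2 * (ηl : ℂ) ^ 2 * ((‖∑ i, star (hbark i) * hbarl i‖ ^ 2 : ℝ) : ℂ)
        + (γk : ℂ) ^ 2 * (γl : ℂ) ^ 2 * Matrix.trace (Qk * Ql)
        + (ηk : ℂ) ^ 2 * (γl : ℂ) ^ 2 * ∑ i, star (hbark i) * (Ql.mulVec hbark) i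
        + (γk : ℂ) ^ 2 * (ηl : ℂ) ^ 2 * ∑ i, star (hbarl i) * (Qk.mulVec hbarl) i := by
  classical
  -- trivial case M = 0
  rcases Nat.eq_zero_or_pos M with hM0 | hM0
  · subst hM0
    simp [Finset.univ_eq_empty, Matrix.trace]
  obtain ⟨m0⟩ : Nonempty (Fin M) := ⟨⟨0, hM0⟩⟩
  simp only [Complex.star_def]
  -- abbreviations
  set ι : Option (Fin M) → Fin M := fun p => p.getD m0 with hι
  set ck : Option (Fin M) → ℂ → ℂ := fun p z => p.elim 1 (fun _ => conj z) with hck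
  set cl : Option (Fin M) → ℂ → ℂ := fun p z => p.elim 1 (fun _ => z) with hcl
  set ζk : Option (Fin M) → Ω → ℂ := fun p x => ck p (zk x (ι p)) with hζk
  set ζl : Option (Fin M) → Ω → ℂ := fun q x => cl q (zl x (ι q)) with hζl
  set A : ℂ := ∑ i, conj (hbark i) * hbarl i with hA
  set al : Fin M → ℂ := fun n => (Real.sqrt (ωl n) : ℂ) * ∑ i, conj (hbark i) * Ul i n with hal
  set bk : Fin M → ℂ := fun m => (Real.sqrt (ωk m) : ℂ) * ∑ i, conj (Uk i m) * hbarl i with hbk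
  set cc : Fin M → Fin M → ℂ := fun m n =>
    (Real.sqrt (ωk m) : ℂ) * (Real.sqrt (ωl n) : ℂ) * ∑ i, conj (Uk i m) * Ul i n with hcc
  set K : Option (Fin M) → Option (Fin M) → ℂ := fun p q =>
    p.elim (q.elim ((ηk : ℂ) * (ηl : ℂ) * A) (fun n => (ηk : ℂ) * (γl : ℂ) * al n))
      (fun m => q.elim ((γk : ℂ) * (ηl : ℂ) * bk m)
        (fun n => (γk : ℂ) * (γl : ℂ) * cc m n)) with hKdef
  -- unfolding lemmas
  have hζkn : ∀ x, ζk none x = 1 := fun x => rfl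
  have hζks : ∀ m x, ζk (some m) x = conj (zk x m) := fun m x => rfl
  have hζln : ∀ x, ζl none x = 1 := fun x => rfl
  have hζls : ∀ n x, ζl (some n) x = zl x n := fun n x => rfl
  have hKnn : K none none = (ηk : ℂ) * (ηl : ℂ) * A := rfl
  have hKns : ∀ n, K none (some n) = (ηk : ℂ) * (γl : ℂ) * al n := fun n => rfl
  have hKsn : ∀ m, K (some m) none = (γk : ℂ) * (ηl : ℂ) * bk m := fun m => rfl
  have hKss : ∀ m n, K (some m) (some n) = (γk : ℂ) * (γl : ℂ) * cc m n := fun m n => rfl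
  -- main structural identity for the channel inner product
  have key : ∀ x, (∑ i, conj (hk x i) * hl x i)
      = ∑ p : Option (Fin M), ∑ q : Option (Fin M), K p q * (ζk p x * ζl q x) := by
    intro x
    have hkc : ∀ i, conj (hk x i)
        = (ηk : ℂ) * conj (hbark i)
          + (γk : ℂ) * ∑ m, conj (Uk i m) * ((Real.sqrt (ωk m) : ℂ) * conj (zk x m)) := by
      intro i
      rw [hhk x]
      simp only [Matrix.mulVec, dotProduct, map_add, _root_.map_mul, map_sum,
        Complex.conj_ofReal]
    have hlc : ∀ i, hl x i
        = (ηl : ℂ) * hbarl i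
          + (γl : ℂ) * ∑ n, Ul i n * ((Real.sqrt (ωl n) : ℂ) * zl x n) := by
      intro i
      rw [hhl x]
      simp only [Matrix.mulVec, dotProduct]
    have expand : ∀ i, conj (hk x i) * hl x i
        = ((ηk : ℂ) * (ηl : ℂ)) * (conj (hbark i) * hbarl i)
          + (∑ n, ((ηk : ℂ) * (γl : ℂ)
              * ((Real.sqrt (ωl n) : ℂ) * (conj (hbark i) * Ul i n))) * zl x n)
          + ((∑ m, ((γk : ℂ) * (ηl : ℂ)
              * ((Real.sqrt (ωk m) : ℂ) * (conj (Uk i m) * hbarl i))) * conj (zk x m))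
            + ∑ m, ∑ n, ((γk : ℂ) * (γl : ℂ)
              * ((Real.sqrt (ωk m) : ℂ) * (Real.sqrt (ωl n) : ℂ)
                * (conj (Uk i m) * Ul i n))) * (conj (zk x m) * zl x n)) := by
      intro i
      rw [hkc i, hlc i, add_mul, mul_add, mul_add]
      congr 1
      · congr 1
        · ring
        · simp only [Finset.mul_sum]
          exact Finset.sum_congr rfl fun n _ => by ring
      · congr 1
        · simp only [Finset.mul_sum, Finset.sum_mul]
          exact Finset.sum_congr rfl fun m _ => by ring
        · simp only [Finset.mul_sum, Finset.sum_mul]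
          rw [Finset.sum_comm]
          refine Finset.sum_congr rfl fun m _ => Finset.sum_congr rfl fun n _ => by ring
    calc (∑ i, conj (hk x i) * hl x i)
        = ∑ i, (((ηk : ℂ) * (ηl : ℂ)) * (conj (hbark i) * hbarl i)
          + (∑ n, ((ηk : ℂ) * (γl : ℂ)
              * ((Real.sqrt (ωl n) : ℂ) * (conj (hbark i) * Ul i n))) * zl x n)
          + ((∑ m, ((γk : ℂ) * (ηl : ℂ)
              * ((Real.sqrt (ωk m) : ℂ) * (conj (Uk i m) * hbarl i))) * conj (zk x m))
            + ∑ m, ∑ n, ((γk : ℂ) * (γl : ℂ)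
              * ((Real.sqrt (ωk m) : ℂ) * (Real.sqrt (ωl n) : ℂ)
                * (conj (Uk i m) * Ul i n))) * (conj (zk x m) * zl x n))) :=
          Finset.sum_congr rfl fun i _ => expand i
      _ = (∑ i, ((ηk : ℂ) * (ηl : ℂ)) * (conj (hbark i) * hbarl i))
          + (∑ i, ∑ n, ((ηk : ℂ) * (γl : ℂ)
              * ((Real.sqrt (ωl n) : ℂ) * (conj (hbark i) * Ul i n))) * zl x n)
          + ((∑ i, ∑ m, ((γk : ℂ) * (ηl : ℂ)
              * ((Real.sqrt (ωk m) : ℂ) * (conj (Uk i m) * hbarl i))) * conj (zk x m))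
            + ∑ i, ∑ m, ∑ n, ((γk : ℂ) * (γl : ℂ)
              * ((Real.sqrt (ωk m) : ℂ) * (Real.sqrt (ωl n) : ℂ)
                * (conj (Uk i m) * Ul i n))) * (conj (zk x m) * zl x n)) := by
          rw [Finset.sum_add_distrib, Finset.sum_add_distrib, Finset.sum_add_distrib]
      _ = (ηk : ℂ) * (ηl : ℂ) * A
          + (∑ n, ((ηk : ℂ) * (γl : ℂ) * al n) * zl x n)
          + ((∑ m, ((γk : ℂ) * (ηl : ℂ) * bk m) * conj (zk x m))
            + ∑ m, ∑ n, ((γk : ℂ) * (γl : ℂ) * cc m n) * (conj (zk x m) * zl x n)) := by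
          congr 1
          · congr 1
            · rw [hA, ← Finset.mul_sum]
            · rw [Finset.sum_comm]
              refine Finset.sum_congr rfl fun n _ => ?_
              rw [← Finset.sum_mul]
              congr 1
              simp only [hal]
              rw [Finset.mul_sum, Finset.mul_sum]
          · congr 1
            · rw [Finset.sum_comm]
              refine Finset.sum_congr rfl fun m _ => ?_
              rw [← Finset.sum_mul]
              congr 1
              simp only [hbk]
              rw [Finset.mul_sum, Finset.mul_sum]
            · rw [Finset.sum_comm]
              refine Finset.sum_congr rfl fun m _ => ?_
              rw [Finset.sum_comm]
              refine Finset.sum_congr rfl fun n _ => ?_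
              rw [← Finset.sum_mul]
              congr 1
              simp only [hcc]
              rw [Finset.mul_sum, Finset.mul_sum]
      _ = ∑ p : Option (Fin M), ∑ q : Option (Fin M), K p q * (ζk p x * ζl q x) := by
          simp only [Fintype.sum_option, hKnn, hKns, hKsn, hKss, hζkn, hζks, hζln, hζls,
            one_mul, mul_one, Finset.sum_add_distrib]
          ring
  -- measurability and integrability facts
  have hζk_L4 : ∀ p, MemLp (ζk p) 4 μ := by
    rintro (_ | m)
    · exact memLp_const 1
    · exact memLp_conj' (hzk_L4 m)
  have hζl_L4 : ∀ p, MemLp (ζl p) 4 μ := by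
    rintro (_ | n)
    · exact memLp_const 1
    · exact hzl_L4 n
  have hζmulk : ∀ p p', MemLp (fun x => ζk p x * conj (ζk p' x)) 2 μ := fun p p' =>
    memLp_two_mul' (hζk_L4 p) (memLp_conj' (hζk_L4 p'))
  have hζmull : ∀ q q', MemLp (fun x => ζl q x * conj (ζl q' x)) 2 μ := fun q q' =>
    memLp_two_mul' (hζl_L4 q) (memLp_conj' (hζl_L4 q'))
  have hint : ∀ p p' q q',
      Integrable (fun x => (ζk p x * conj (ζk p' x)) * (ζl q x * conj (ζl q' x))) μ :=
    fun p p' q q' => integrable_mul_of_memLp_two' (hζmulk p p') (hζmull q q')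
  -- factorization across the two independent families
  have hfact : ∀ p p' q q',
      ∫ x, (ζk p x * conj (ζk p' x)) * (ζl q x * conj (ζl q' x)) ∂μ
        = (∫ x, ζk p x * conj (ζk p' x) ∂μ) * ∫ x, ζl q x * conj (ζl q' x) ∂μ := by
    intro p p' q q'
    have hw_meas : ∀ i, Measurable
        ((Sum.elim (fun m x => zk x m) (fun m x => zl x m) : Fin M ⊕ Fin M → Ω → ℂ) i) := by
      rintro (m | m)
      · exact hzk_meas m
      · exact hzl_meas m
    have hpair : IndepFun (fun x => (zk x (ι p), zk x (ι p')))
        (fun x => (zl x (ι q), zl x (ι q'))) μ := by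
      have := hz_indep.indepFun_prodMk_prodMk hw_meas
        (Sum.inl (ι p)) (Sum.inl (ι p')) (Sum.inr (ι q)) (Sum.inr (ι q'))
        (by simp) (by simp) (by simp) (by simp)
      exact this
    have hckm : ∀ r : Option (Fin M), Measurable (ck r) := by
      rintro (_ | m)
      · exact measurable_const
      · exact Complex.continuous_conj.measurable
    have hclm : ∀ r : Option (Fin M), Measurable (cl r) := by
      rintro (_ | m)
      · exact measurable_const
      · exact measurable_id
    have hF : Measurable (fun ab : ℂ × ℂ => ck p ab.1 * conj (ck p' ab.2)) :=
      ((hckm p).comp measurable_fst).mul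
        ((Complex.continuous_conj.measurable.comp (hckm p')).comp measurable_snd)
    have hG : Measurable (fun ab : ℂ × ℂ => cl q ab.1 * conj (cl q' ab.2)) :=
      ((hclm q).comp measurable_fst).mul
        ((Complex.continuous_conj.measurable.comp (hclm q')).comp measurable_snd)
    have hind : IndepFun (fun x => ζk p x * conj (ζk p' x))
        (fun x => ζl q x * conj (ζl q' x)) μ := hpair.comp hF hG
    exact indepFun_integral_mul_complex' hind
      ((hζmulk p p').integrable (by norm_num))
      ((hζmull q q').integrable (by norm_num))
  -- single–family second moments
  have hEk : ∀ p p', (∫ x, ζk p x * conj (ζk p' x) ∂μ)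
      = if p = p' then 1 else 0 := by
    rintro (_ | m) (_ | m')
    · simp [hζkn]
    · have e : ∫ x, ζk none x * conj (ζk (some m') x) ∂μ = ∫ x, zk x m' ∂μ :=
        integral_congr_ae (Filter.Eventually.of_forall fun x => by
          simp [hζkn, hζks, RCLike.conj_conj])
      rw [e, hzk_mean m']
      simp
    · have e : ∫ x, ζk (some m) x * conj (ζk none x) ∂μ
          = ∫ x, conj (zk x m) ∂μ :=
        integral_congr_ae (Filter.Eventually.of_forall fun x => by
          simp [hζkn, hζks])
      rw [e, integral_conj, hzk_mean m]
      simp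
    · by_cases hmm' : m = m'
      · subst hmm'
        rw [if_pos rfl]
        calc ∫ x, ζk (some m) x * conj (ζk (some m) x) ∂μ
            = ∫ x, ((‖zk x m‖ ^ 2 : ℝ) : ℂ) ∂μ :=
              integral_congr_ae (Filter.Eventually.of_forall fun x => by
                simp [hζks, RCLike.conj_conj, RCLike.conj_mul, ← Complex.ofReal_pow])
          _ = ((∫ x, ‖zk x m‖ ^ 2 ∂μ : ℝ) : ℂ) := integral_ofReal
          _ = 1 := by rw [hzk_abs2 m]; norm_num
      · have hindep : IndepFun (fun x => zk x m) (fun x => zk x m') μ := by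
          have := hz_indep.indepFun
            (show (Sum.inl m : Fin M ⊕ Fin M) ≠ Sum.inl m' by simpa using hmm')
          exact this
        have hc : IndepFun (fun x => conj (zk x m)) (fun x => zk x m') μ :=
          hindep.comp Complex.continuous_conj.measurable measurable_id
        have e : ∫ x, ζk (some m) x * conj (ζk (some m') x) ∂μ
            = ∫ x, conj (zk x m) * zk x m' ∂μ :=
          integral_congr_ae (Filter.Eventually.of_forall fun x => by
            simp [hζks, RCLike.conj_conj])
        rw [e, indepFun_integral_mul_complex' hc
            ((memLp_conj' (hzk_L4 m)).integrable (by norm_num))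
            ((hzk_L4 m').integrable (by norm_num)),
          integral_conj, hzk_mean m]
        simp [hmm']
  have hEl : ∀ q q', (∫ x, ζl q x * conj (ζl q' x) ∂μ)
      = if q = q' then 1 else 0 := by
    rintro (_ | n) (_ | n')
    · simp [hζln]
    · have e : ∫ x, ζl none x * conj (ζl (some n') x) ∂μ
          = ∫ x, conj (zl x n') ∂μ :=
        integral_congr_ae (Filter.Eventually.of_forall fun x => by
          simp [hζln, hζls])
      rw [e, integral_conj, hzl_mean n']
      simp
    · have e : ∫ x, ζl (some n) x * conj (ζl none x) ∂μ = ∫ x, zl x n ∂μ :=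
        integral_congr_ae (Filter.Eventually.of_forall fun x => by
          simp [hζln, hζls])
      rw [e, hzl_mean n]
      simp
    · by_cases hnn' : n = n'
      · subst hnn'
        rw [if_pos rfl]
        calc ∫ x, ζl (some n) x * conj (ζl (some n) x) ∂μ
            = ∫ x, ((‖zl x n‖ ^ 2 : ℝ) : ℂ) ∂μ :=
              integral_congr_ae (Filter.Eventually.of_forall fun x => by
                simp [hζls, RCLike.mul_conj, ← Complex.ofReal_pow])
          _ = ((∫ x, ‖zl x n‖ ^ 2 ∂μ : ℝ) : ℂ) := integral_ofReal
          _ = 1 := by rw [hzl_abs2 n]; norm_num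
      · have hindep : IndepFun (fun x => zl x n) (fun x => zl x n') μ := by
          have := hz_indep.indepFun
            (show (Sum.inr n : Fin M ⊕ Fin M) ≠ Sum.inr n' by simpa using hnn')
          exact this
        have hc : IndepFun (fun x => zl x n) (fun x => conj (zl x n')) μ :=
          hindep.comp measurable_id Complex.continuous_conj.measurable
        have e : ∫ x, ζl (some n) x * conj (ζl (some n') x) ∂μ
            = ∫ x, zl x n * conj (zl x n') ∂μ :=
          integral_congr_ae (Filter.Eventually.of_forall fun x => by
            simp [hζls])
        rw [e, indepFun_integral_mul_complex' hc
            ((hzl_L4 n).integrable (by norm_num))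
            ((memLp_conj' (hzl_L4 n')).integrable (by norm_num)),
          hzl_mean n]
        simp [hnn']
  -- the expectation of |S|^2
  have main : ((∫ x, ‖∑ i, conj (hk x i) * hl x i‖ ^ 2 ∂μ : ℝ) : ℂ)
      = ∑ p : Option (Fin M), ∑ q : Option (Fin M), K p q * conj (K p q) := by
    have hSrw : ∫ x, ‖∑ i, conj (hk x i) * hl x i‖ ^ 2 ∂μ
        = ∫ x, ‖∑ u : Option (Fin M) × Option (Fin M),
            K u.1 u.2 * (ζk u.1 x * ζl u.2 x)‖ ^ 2 ∂μ := by
      refine integral_congr_ae (Filter.Eventually.of_forall fun x => ?_)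
      dsimp only
      rw [key x, Fintype.sum_prod_type]
    calc ((∫ x, ‖∑ i, conj (hk x i) * hl x i‖ ^ 2 ∂μ : ℝ) : ℂ)
        = ((∫ x, ‖∑ u : Option (Fin M) × Option (Fin M),
            K u.1 u.2 * (ζk u.1 x * ζl u.2 x)‖ ^ 2 ∂μ : ℝ) : ℂ) := by rw [hSrw]
      _ = ∫ x, ((‖∑ u : Option (Fin M) × Option (Fin M),
            K u.1 u.2 * (ζk u.1 x * ζl u.2 x)‖ ^ 2 : ℝ) : ℂ) ∂μ := integral_ofReal.symm
      _ = ∫ x, ∑ u : Option (Fin M) × Option (Fin M),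
            ∑ v : Option (Fin M) × Option (Fin M),
            (K u.1 u.2 * conj (K v.1 v.2)) *
              ((ζk u.1 x * conj (ζk v.1 x)) * (ζl u.2 x * conj (ζl v.2 x))) ∂μ := by
          refine integral_congr_ae (Filter.Eventually.of_forall fun x => ?_)
          dsimp only
          rw [show ((‖∑ u : Option (Fin M) × Option (Fin M),
              K u.1 u.2 * (ζk u.1 x * ζl u.2 x)‖ ^ 2 : ℝ) : ℂ)
              = (∑ u : Option (Fin M) × Option (Fin M), K u.1 u.2 * (ζk u.1 x * ζl u.2 x)) *
                conj (∑ u : Option (Fin M) × Option (Fin M),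
                  K u.1 u.2 * (ζk u.1 x * ζl u.2 x)) from by
            rw [Complex.ofReal_pow]; exact (RCLike.mul_conj _).symm]
          rw [map_sum, Finset.sum_mul_sum]
          refine Finset.sum_congr rfl fun u _ => Finset.sum_congr rfl fun v _ => ?_
          rw [_root_.map_mul, _root_.map_mul]
          ring
      _ = ∑ u : Option (Fin M) × Option (Fin M), ∑ v : Option (Fin M) × Option (Fin M),
            ∫ x, (K u.1 u.2 * conj (K v.1 v.2)) *
              ((ζk u.1 x * conj (ζk v.1 x)) * (ζl u.2 x * conj (ζl v.2 x))) ∂μ := by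
          rw [integral_finset_sum _ (fun u _ => integrable_finset_sum _
            (fun v _ => (hint u.1 v.1 u.2 v.2).const_mul _))]
          exact Finset.sum_congr rfl fun u _ => integral_finset_sum _
            (fun v _ => (hint u.1 v.1 u.2 v.2).const_mul _)
      _ = ∑ u : Option (Fin M) × Option (Fin M), ∑ v : Option (Fin M) × Option (Fin M),
            (K u.1 u.2 * conj (K v.1 v.2)) *
              ((if u.1 = v.1 then (1:ℂ) else 0) * (if u.2 = v.2 then (1:ℂ) else 0)) := by
          refine Finset.sum_congr rfl fun u _ => Finset.sum_congr rfl fun v _ => ?_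
          rw [integral_const_mul, hfact u.1 v.1 u.2 v.2, hEk u.1 v.1, hEl u.2 v.2]
      _ = ∑ p : Option (Fin M), ∑ q : Option (Fin M), K p q * conj (K p q) := by
          rw [Fintype.sum_prod_type]
          refine Finset.sum_congr rfl fun p _ => Finset.sum_congr rfl fun q _ => ?_
          rw [Fintype.sum_prod_type]
          simp [mul_ite, ite_mul, mul_one, mul_zero, zero_mul, one_mul,
            Finset.sum_ite_eq, Finset.mem_univ]
  rw [main]
  -- matrix entry formulas
  have hQkap : ∀ i j, Qk i j = ∑ m, Uk i m * ((ωk m : ℝ) : ℂ) * conj (Uk j m) := by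
    intro i j
    rw [hQk]
    simp [Matrix.mul_apply, Matrix.diagonal_apply, Matrix.conjTranspose_apply, RCLike.star_def,
      mul_ite, ite_mul, mul_zero, zero_mul, Finset.sum_ite_eq, Finset.sum_ite_eq',
      Finset.mem_univ]
  have hQlap : ∀ i j, Ql i j = ∑ n, Ul i n * ((ωl n : ℝ) : ℂ) * conj (Ul j n) := by
    intro i j
    rw [hQl]
    simp [Matrix.mul_apply, Matrix.diagonal_apply, Matrix.conjTranspose_apply, RCLike.star_def,
      mul_ite, ite_mul, mul_zero, zero_mul, Finset.sum_ite_eq, Finset.sum_ite_eq',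
      Finset.mem_univ]
  have hsqk : ∀ m, ((ωk m : ℝ) : ℂ)
      = ((Real.sqrt (ωk m) : ℝ) : ℂ) * ((Real.sqrt (ωk m) : ℝ) : ℂ) := fun m => by
    rw [← Complex.ofReal_mul, Real.mul_self_sqrt (hωk_nonneg m)]
  have hsql : ∀ n, ((ωl n : ℝ) : ℂ)
      = ((Real.sqrt (ωl n) : ℝ) : ℂ) * ((Real.sqrt (ωl n) : ℝ) : ℂ) := fun n => by
    rw [← Complex.ofReal_mul, Real.mul_self_sqrt (hωl_nonneg n)]
  -- block 1
  have blk1 : K none none * conj (K none none)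
      = (ηk : ℂ) ^ 2 * (ηl : ℂ) ^ 2
        * ((‖∑ i, conj (hbark i) * hbarl i‖ ^ 2 : ℝ) : ℂ) := by
    rw [hKnn, ← hA]
    have : ((‖A‖ ^ 2 : ℝ) : ℂ) = A * conj A := by
      rw [Complex.ofReal_pow]
      exact (RCLike.mul_conj A).symm
    rw [this, _root_.map_mul, _root_.map_mul, Complex.conj_ofReal, Complex.conj_ofReal]
    ring
  -- block 2 : the `Ql` quadratic form
  have blk2 : ∑ n, K none (some n) * conj (K none (some n))
      = (ηk : ℂ) ^ 2 * (γl : ℂ) ^ 2 * ∑ i, conj (hbark i) * (Ql.mulVec hbark) i := by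
    have rhs' : ∑ n, ((ωl n : ℝ) : ℂ) * ((∑ i, conj (hbark i) * Ul i n)
          * conj (∑ i, conj (hbark i) * Ul i n))
        = ∑ i, conj (hbark i) * (Ql.mulVec hbark) i := by
      calc ∑ n, ((ωl n : ℝ) : ℂ) * ((∑ i, conj (hbark i) * Ul i n)
              * conj (∑ i, conj (hbark i) * Ul i n))
          = ∑ n, ∑ i, ∑ j, conj (hbark i)
              * (Ul i n * ((ωl n : ℝ) : ℂ) * conj (Ul j n)) * hbark j := by
            refine Finset.sum_congr rfl fun n _ => ?_
            rw [map_sum, Finset.sum_mul_sum, Finset.mul_sum]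
            refine Finset.sum_congr rfl fun i _ => ?_
            rw [Finset.mul_sum]
            refine Finset.sum_congr rfl fun j _ => ?_
            rw [_root_.map_mul, RCLike.conj_conj]
            ring
        _ = ∑ i, ∑ j, ∑ n, conj (hbark i)
              * (Ul i n * ((ωl n : ℝ) : ℂ) * conj (Ul j n)) * hbark j :=
            (sum_swap3 _).symm
        _ = ∑ i, conj (hbark i) * (Ql.mulVec hbark) i := by
            refine Finset.sum_congr rfl fun i _ => ?_
            simp only [Matrix.mulVec, dotProduct, hQlap, Finset.sum_mul,
              Finset.mul_sum]
            refine Finset.sum_congr rfl fun j _ => Finset.sum_congr rfl fun n _ => by ring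
    calc ∑ n, K none (some n) * conj (K none (some n))
        = ∑ n, (ηk : ℂ) ^ 2 * (γl : ℂ) ^ 2 * (((ωl n : ℝ) : ℂ)
            * ((∑ i, conj (hbark i) * Ul i n)
              * conj (∑ i, conj (hbark i) * Ul i n))) := by
          refine Finset.sum_congr rfl fun n _ => ?_
          rw [hKns n]
          simp only [hal, _root_.map_mul, Complex.conj_ofReal]
          rw [hsql n]
          ring
      _ = (ηk : ℂ) ^ 2 * (γl : ℂ) ^ 2 * ∑ n, ((ωl n : ℝ) : ℂ)
            * ((∑ i, conj (hbark i) * Ul i n)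
              * conj (∑ i, conj (hbark i) * Ul i n)) := by rw [← Finset.mul_sum]
      _ = (ηk : ℂ) ^ 2 * (γl : ℂ) ^ 2 * ∑ i, conj (hbark i) * (Ql.mulVec hbark) i := by
          rw [rhs']
  -- block 3 : the `Qk` quadratic form
  have blk3 : ∑ m, K (some m) none * conj (K (some m) none)
      = (γk : ℂ) ^ 2 * (ηl : ℂ) ^ 2 * ∑ i, conj (hbarl i) * (Qk.mulVec hbarl) i := by
    have rhs' : ∑ m, ((ωk m : ℝ) : ℂ) * ((∑ i, conj (Uk i m) * hbarl i)
          * conj (∑ i, conj (Uk i m) * hbarl i))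
        = ∑ i, conj (hbarl i) * (Qk.mulVec hbarl) i := by
      calc ∑ m, ((ωk m : ℝ) : ℂ) * ((∑ i, conj (Uk i m) * hbarl i)
              * conj (∑ i, conj (Uk i m) * hbarl i))
          = ∑ m, ∑ i, ∑ j, conj (hbarl i)
              * (Uk i m * ((ωk m : ℝ) : ℂ) * conj (Uk j m)) * hbarl j := by
            refine Finset.sum_congr rfl fun m _ => ?_
            rw [map_sum, Finset.sum_mul_sum, Finset.mul_sum, Finset.sum_comm]
            refine Finset.sum_congr rfl fun i _ => ?_
            rw [Finset.mul_sum]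
            refine Finset.sum_congr rfl fun j _ => ?_
            rw [_root_.map_mul, RCLike.conj_conj]
            ring
        _ = ∑ i, ∑ j, ∑ m, conj (hbarl i)
              * (Uk i m * ((ωk m : ℝ) : ℂ) * conj (Uk j m)) * hbarl j :=
            (sum_swap3 _).symm
        _ = ∑ i, conj (hbarl i) * (Qk.mulVec hbarl) i := by
            refine Finset.sum_congr rfl fun i _ => ?_
            simp only [Matrix.mulVec, dotProduct, hQkap, Finset.sum_mul,
              Finset.mul_sum]
            refine Finset.sum_congr rfl fun j _ => Finset.sum_congr rfl fun m _ => by ring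
    calc ∑ m, K (some m) none * conj (K (some m) none)
        = ∑ m, (γk : ℂ) ^ 2 * (ηl : ℂ) ^ 2 * (((ωk m : ℝ) : ℂ)
            * ((∑ i, conj (Uk i m) * hbarl i)
              * conj (∑ i, conj (Uk i m) * hbarl i))) := by
          refine Finset.sum_congr rfl fun m _ => ?_
          rw [hKsn m]
          simp only [hbk, _root_.map_mul, Complex.conj_ofReal]
          rw [hsqk m]
          ring
      _ = (γk : ℂ) ^ 2 * (ηl : ℂ) ^ 2 * ∑ m, ((ωk m : ℝ) : ℂ)
            * ((∑ i, conj (Uk i m) * hbarl i)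
              * conj (∑ i, conj (Uk i m) * hbarl i)) := by rw [← Finset.mul_sum]
      _ = (γk : ℂ) ^ 2 * (ηl : ℂ) ^ 2 * ∑ i, conj (hbarl i) * (Qk.mulVec hbarl) i := by
          rw [rhs']
  -- block 4 : the trace term
  have blk4 : ∑ m, ∑ n, K (some m) (some n) * conj (K (some m) (some n))
      = (γk : ℂ) ^ 2 * (γl : ℂ) ^ 2 * Matrix.trace (Qk * Ql) := by
    have tr : Matrix.trace (Qk * Ql)
        = ∑ m, ∑ n, ((ωk m : ℝ) : ℂ) * ((ωl n : ℝ) : ℂ)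
            * ((∑ i, conj (Uk i m) * Ul i n) * conj (∑ i, conj (Uk i m) * Ul i n)) := by
      calc Matrix.trace (Qk * Ql)
          = ∑ i, ∑ j, Qk i j * Ql j i := by
            simp [Matrix.trace, Matrix.mul_apply, Matrix.diag]
        _ = ∑ i, ∑ j, ∑ m, ∑ n, (Uk i m * ((ωk m : ℝ) : ℂ) * conj (Uk j m))
              * (Ul j n * ((ωl n : ℝ) : ℂ) * conj (Ul i n)) := by
            refine Finset.sum_congr rfl fun i _ => Finset.sum_congr rfl fun j _ => ?_
            rw [hQkap i j, hQlap j i, Finset.sum_mul_sum]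
        _ = ∑ m, ∑ n, ∑ i, ∑ j, (Uk i m * ((ωk m : ℝ) : ℂ) * conj (Uk j m))
              * (Ul j n * ((ωl n : ℝ) : ℂ) * conj (Ul i n)) := sum_swap4 _
        _ = ∑ m, ∑ n, ((ωk m : ℝ) : ℂ) * ((ωl n : ℝ) : ℂ)
              * ((∑ i, conj (Uk i m) * Ul i n) * conj (∑ i, conj (Uk i m) * Ul i n)) := by
            refine Finset.sum_congr rfl fun m _ => Finset.sum_congr rfl fun n _ => ?_
            rw [map_sum, Finset.sum_mul_sum, Finset.mul_sum, Finset.sum_comm]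
            refine Finset.sum_congr rfl fun i _ => ?_
            rw [Finset.mul_sum]
            refine Finset.sum_congr rfl fun j _ => ?_
            rw [_root_.map_mul, RCLike.conj_conj]
            ring
    rw [tr]
    calc ∑ m, ∑ n, K (some m) (some n) * conj (K (some m) (some n))
        = ∑ m, ∑ n, (γk : ℂ) ^ 2 * (γl : ℂ) ^ 2 * (((ωk m : ℝ) : ℂ) * ((ωl n : ℝ) : ℂ)
            * ((∑ i, conj (Uk i m) * Ul i n) * conj (∑ i, conj (Uk i m) * Ul i n))) := by
          refine Finset.sum_congr rfl fun m _ => Finset.sum_congr rfl fun n _ => ?_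
          rw [hKss m n]
          simp only [hcc, _root_.map_mul, Complex.conj_ofReal]
          rw [hsqk m, hsql n]
          ring
      _ = (γk : ℂ) ^ 2 * (γl : ℂ) ^ 2 * ∑ m, ∑ n, (((ωk m : ℝ) : ℂ) * ((ωl n : ℝ) : ℂ)
            * ((∑ i, conj (Uk i m) * Ul i n) * conj (∑ i, conj (Uk i m) * Ul i n))) := by
          simp only [← Finset.mul_sum]
  -- assemble
  calc ∑ p : Option (Fin M), ∑ q : Option (Fin M), K p q * conj (K p q)
      = K none none * conj (K none none)
        + (∑ n, K none (some n) * conj (K none (some n)))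
        + ((∑ m, K (some m) none * conj (K (some m) none))
          + ∑ m, ∑ n, K (some m) (some n) * conj (K (some m) (some n))) := by
        simp only [Fintype.sum_option, Finset.sum_add_distrib]
        ring
    _ = _ := by
        rw [blk1, blk2, blk3, blk4]
        ring
end

section
/- (Channel hardening, Corollary 1) For each M ∈ ℕ, let h^(M) = η·h̄^(M) + γ·U^(M)(ω̃^(M) ⊙ z^(M)) be an M-dimensional Weichselberger Ricean channel vector, all defined on a common probability space. Assume there is a constant C < ∞ such that for every M and every m ≤ M, ω^(M)_m ≤ C and |v^(M)_m| ≤ C, where v^(M) = (U^(M))ᴴ h̄^(M). Then ‖h^(M)‖²/M converges to 1 in probability as M → ∞. -/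
open MeasureTheory ProbabilityTheory Matrix Finset Filter
open scoped ENNReal Topology

/- ## Auxiliary lemmas -/

lemma ch_dot_self_re {M : ℕ} (a : Fin M → ℂ) : (star a ⬝ᵥ a).re = ∑ i, ‖a i‖ ^ 2 := by
  simp [dotProduct, Complex.re_sum, mul_comm, Complex.mul_conj, Complex.normSq_eq_norm_sq,
    ← Complex.ofReal_pow]

lemma ch_unitary {M : ℕ} (U : Matrix (Fin M) (Fin M) ℂ) (hU : U ∈ Matrix.unitaryGroup (Fin M) ℂ)
    (w : Fin M → ℂ) : star (U.mulVec w) ⬝ᵥ (U.mulVec w) = star w ⬝ᵥ w := by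
  rw [Matrix.star_mulVec, Matrix.dotProduct_mulVec, Matrix.vecMul_vecMul]
  have : Uᴴ * U = 1 := Matrix.UnitaryGroup.star_mul_self ⟨U, hU⟩
  rw [this, Matrix.vecMul_one]

lemma ch_cross {M : ℕ} (U : Matrix (Fin M) (Fin M) ℂ) (hbar w : Fin M → ℂ) :
    star hbar ⬝ᵥ U.mulVec w = star (Uᴴ.mulVec hbar) ⬝ᵥ w := by
  rw [Matrix.dotProduct_mulVec, Matrix.star_mulVec, Matrix.conjTranspose_conjTranspose]

lemma ch_norm_sq (t : ℂ) : ‖t‖ ^ 2 = Complex.normSq t := by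
  rw [Complex.normSq_eq_norm_sq]

lemma ch_identity {M : ℕ} (η γ : ℝ) (hbar : Fin M → ℂ) (U : Matrix (Fin M) (Fin M) ℂ)
    (hU : U ∈ Matrix.unitaryGroup (Fin M) ℂ) (w : Fin M → ℂ) :
    ∑ i, ‖(η:ℂ) * hbar i + (γ:ℂ) * (U.mulVec w) i‖ ^ 2
      = η^2 * ∑ i, ‖hbar i‖^2 + γ^2 * ∑ m, ‖w m‖^2
        + 2*η*γ * ∑ m, ((starRingEnd ℂ) ((Uᴴ.mulVec hbar) m) * w m).re := by
  set y := U.mulVec w with hy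
  have expand : ∀ i, ‖(η:ℂ) * hbar i + (γ:ℂ) * y i‖ ^ 2
      = η^2 * ‖hbar i‖^2 + γ^2 * ‖y i‖^2
        + 2*η*γ * (hbar i * (starRingEnd ℂ) (y i)).re := by
    intro i
    rw [ch_norm_sq, Complex.normSq_add, Complex.normSq_mul, Complex.normSq_mul]
    have h1 : (η:ℂ) * hbar i * (starRingEnd ℂ) ((γ:ℂ) * y i)
        = ((η*γ:ℝ):ℂ) * (hbar i * (starRingEnd ℂ) (y i)) := by
      rw [_root_.map_mul, Complex.conj_ofReal]; push_cast; ring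
    rw [h1, Complex.re_ofReal_mul, ch_norm_sq, ch_norm_sq, Complex.normSq_ofReal,
      Complex.normSq_ofReal]
    ring
  simp only [expand]
  rw [Finset.sum_add_distrib, Finset.sum_add_distrib, ← Finset.mul_sum, ← Finset.mul_sum,
    ← Finset.mul_sum]
  have hsy : ∑ i, ‖y i‖^2 = ∑ m, ‖w m‖^2 := by
    rw [← ch_dot_self_re, ← ch_dot_self_re, ch_unitary U hU w]
  have hcross : ∑ i, (hbar i * (starRingEnd ℂ) (y i)).re
      = ∑ m, ((starRingEnd ℂ) ((Uᴴ.mulVec hbar) m) * w m).re := by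
    rw [← Complex.re_sum, ← Complex.re_sum]
    have h2 : ∑ i, hbar i * (starRingEnd ℂ) (y i)
        = (starRingEnd ℂ) (star hbar ⬝ᵥ y) := by
      rw [dotProduct, _root_.map_sum]
      refine Finset.sum_congr rfl fun i _ => ?_
      simp [mul_comm]
    rw [h2, Complex.conj_re, ch_cross U hbar w, dotProduct]
    rfl
  rw [hsy, hcross]

/-- The centered summand appearing in `‖h‖² - M`. -/
noncomputable def chW (η γ : ℝ) (c : ℂ) (r : ℝ) (u : ℂ) : ℝ :=
  2*η*γ * ((starRingEnd ℂ) c * (Real.sqrt r : ℂ) * u).re + γ^2 * (r * (‖u‖^2 - 1))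

lemma chW_continuous (η γ : ℝ) (c : ℂ) (r : ℝ) : Continuous (chW η γ c r) := by
  unfold chW; fun_prop

lemma chW_pointwise_bound (η γ : ℝ) (hη2 : η^2 ≤ 1) (hγ2 : γ^2 ≤ 1) (c : ℂ) (r C : ℝ)
    (hc : ‖c‖ ≤ C) (hr0 : 0 ≤ r) (hrC : r ≤ C) (u : ℂ) :
    (chW η γ c r u)^2 ≤ 8*C^3*‖u‖^2 + 2*C^2*(‖u‖^2 - 1)^2 := by
  unfold chW
  set s := ‖u‖ with hs
  set t := ((starRingEnd ℂ) c * (Real.sqrt r : ℂ) * u).re with htt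
  have hb : |t| ≤ ‖c‖ * Real.sqrt r * s := by
    have h1 : |t| ≤ ‖(starRingEnd ℂ) c * (Real.sqrt r : ℂ) * u‖ := by
      exact Complex.abs_re_le_norm _
    have h2 : ‖(starRingEnd ℂ) c * (Real.sqrt r : ℂ) * u‖ = ‖c‖ * Real.sqrt r * s := by
      simp [_root_.map_mul, Complex.norm_conj, Complex.norm_real,
        abs_of_nonneg (Real.sqrt_nonneg r), hs]
    linarith [h1, h2.le, h2.ge]
  have ht2 : t^2 ≤ ‖c‖^2 * r * s^2 := by
    have h3 : t^2 ≤ (‖c‖ * Real.sqrt r * s)^2 := by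
      rw [← sq_abs t]
      exact pow_le_pow_left₀ (abs_nonneg _) hb 2
    calc t^2 ≤ (‖c‖ * Real.sqrt r * s)^2 := h3
      _ = ‖c‖^2 * (Real.sqrt r)^2 * s^2 := by ring
      _ = ‖c‖^2 * r * s^2 := by rw [Real.sq_sqrt hr0]
  have h6 : ‖c‖^2 * r ≤ C^3 := by
    calc ‖c‖^2 * r ≤ C^2 * C :=
          mul_le_mul (pow_le_pow_left₀ (norm_nonneg c) hc 2) hrC hr0 (sq_nonneg C)
      _ = C^3 := by ring
  have ht3 : t^2 ≤ C^3 * s^2 := by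
    calc t^2 ≤ ‖c‖^2 * r * s^2 := ht2
      _ ≤ C^3 * s^2 := mul_le_mul_of_nonneg_right h6 (sq_nonneg s)
  have hηγ : η^2 * γ^2 ≤ 1 := by nlinarith [sq_nonneg η, sq_nonneg γ]
  have hγ4 : γ^4 ≤ 1 := by nlinarith [sq_nonneg (γ^2)]
  have hr2 : γ^4 * r^2 ≤ C^2 := by
    calc γ^4 * r^2 ≤ 1 * r^2 := mul_le_mul_of_nonneg_right hγ4 (sq_nonneg r)
      _ ≤ C^2 := by nlinarith [pow_le_pow_left₀ hr0 hrC 2]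
  have hA : (2*η*γ*t)^2 ≤ 4*C^3*s^2 := by
    nlinarith [mul_nonneg (sub_nonneg.mpr hηγ) (sq_nonneg t), ht3, sq_nonneg t]
  have hB : (γ^2*(r*(s^2-1)))^2 ≤ C^2*(s^2-1)^2 := by
    nlinarith [mul_nonneg (sub_nonneg.mpr hr2) (sq_nonneg (s^2-1))]
  nlinarith [sq_nonneg (2*η*γ*t - γ^2*(r*(s^2-1))), hA, hB]

section moments
variable {Ω : Type*} [MeasurableSpace Ω] {μ : Measure Ω} [IsProbabilityMeasure μ]
  {z : Ω → ℂ}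

omit [IsProbabilityMeasure μ] in
lemma ch_normsq_memℒp (hz4 : MemLp z 4 μ) : MemLp (fun x => ‖z x‖^2) 2 μ := by
  have h : MemLp (fun x => ‖z x‖ ^ (2:ℝ)) 2 μ := by
    constructor
    · exact (hz4.aestronglyMeasurable.norm.aemeasurable.pow_const _).aestronglyMeasurable
    · rw [eLpNorm_norm_rpow _ (by norm_num : (0:ℝ) < 2)]
      have h2 : (2 : ℝ≥0∞) * ENNReal.ofReal 2 = 4 := by
        rw [ENNReal.ofReal_ofNat]; norm_num
      rw [h2]
      exact ENNReal.rpow_lt_top_of_nonneg (by norm_num) hz4.2.ne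
  convert h using 2 with x
  rw [← Real.rpow_natCast]; norm_num

lemma ch_int_sq (hz4 : MemLp z 4 μ) : Integrable (fun x => ‖z x‖^2) μ :=
  ((hz4.mono_exponent (by norm_num)).norm.integrable_sq :)

lemma ch_int_quad (hz4 : MemLp z 4 μ) : Integrable (fun x => ‖z x‖^4) μ := by
  have := (ch_normsq_memℒp hz4).integrable_sq
  convert this using 2 with x
  ring

lemma chW_memℒp (η γ : ℝ) (c : ℂ) (r : ℝ) (hz4 : MemLp z 4 μ) :
    MemLp (fun x => chW η γ c r (z x)) 2 μ := by
  unfold chW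
  have h1 : MemLp (fun x => ((starRingEnd ℂ) c * (Real.sqrt r : ℂ) * z x)) 2 μ := by
    simpa [mul_assoc] using ((hz4.mono_exponent (by norm_num : (2:ℝ≥0∞) ≤ 4)).const_mul
      ((starRingEnd ℂ) c * (Real.sqrt r : ℂ)))
  have h2 := h1.re
  simp only [RCLike.re_to_complex] at h2
  have h3 : MemLp (fun x => r * (‖z x‖^2 - 1)) 2 μ := by
    have h4 : MemLp (fun x => ‖z x‖^2 - 1) 2 μ := (ch_normsq_memℒp hz4).sub (memLp_const 1)
    exact h4.const_mul r
  exact (h2.const_mul (2*η*γ)).add (h3.const_mul (γ^2))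

lemma chW_integral (η γ : ℝ) (c : ℂ) (r : ℝ) (hz4 : MemLp z 4 μ)
    (hmean : ∫ x, z x ∂μ = 0) (habs2 : ∫ x, ‖z x‖^2 ∂μ = 1) :
    ∫ x, chW η γ c r (z x) ∂μ = 0 := by
  unfold chW
  have hint : Integrable z μ := hz4.integrable (by norm_num)
  have hint1 : Integrable (fun x => ((starRingEnd ℂ) c * (Real.sqrt r : ℂ) * z x)) μ := by
    simpa [mul_assoc] using hint.const_mul ((starRingEnd ℂ) c * (Real.sqrt r : ℂ))
  have hre : Integrable (fun x => ((starRingEnd ℂ) c * (Real.sqrt r : ℂ) * z x).re) μ := by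
    have := hint1.re
    simpa [RCLike.re_to_complex] using this
  have hintA : Integrable (fun x => 2*η*γ * ((starRingEnd ℂ) c * (Real.sqrt r:ℂ) * z x).re) μ :=
    hre.const_mul _
  have hintB : Integrable (fun x => γ^2 * (r * (‖z x‖^2 - 1))) μ := by
    have h5 : Integrable (fun x => ‖z x‖^2 - 1) μ := (ch_int_sq hz4).sub (integrable_const 1)
    exact (h5.const_mul r).const_mul (γ^2)
  rw [integral_add hintA hintB, integral_const_mul, integral_const_mul, integral_const_mul]
  have e1 : ∫ x, ((starRingEnd ℂ) c * (Real.sqrt r : ℂ) * z x).re ∂μ = 0 := by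
    have := integral_re (𝕜 := ℂ) hint1
    simp only [RCLike.re_to_complex] at this
    rw [this, integral_const_mul, hmean, mul_zero, Complex.zero_re]
  have e2 : ∫ x, (‖z x‖^2 - 1) ∂μ = 0 := by
    rw [integral_sub (ch_int_sq hz4) (integrable_const 1), habs2, integral_const]
    simp
  rw [e1, e2]
  ring

lemma ch_int_dev_sq (hz4 : MemLp z 4 μ) (habs2 : ∫ x, ‖z x‖^2 ∂μ = 1)
    (habs4 : ∫ x, ‖z x‖^4 ∂μ = 2) : ∫ x, (‖z x‖^2 - 1)^2 ∂μ = 1 := by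
  have e : ∀ x : Ω, (‖z x‖^2 - 1)^2 = ‖z x‖^4 - 2*‖z x‖^2 + 1 := fun x => by ring
  simp_rw [e]
  have I2 : Integrable (fun x => 2*‖z x‖^2) μ := (ch_int_sq hz4).const_mul 2
  have I1 : Integrable (fun x => ‖z x‖^4 - 2*‖z x‖^2) μ := (ch_int_quad hz4).sub I2
  rw [integral_add I1 (integrable_const 1), integral_sub (ch_int_quad hz4) I2,
    integral_const_mul, habs4, habs2, integral_const]
  simp

lemma chW_variance_le (η γ : ℝ) (hη2 : η^2 ≤ 1) (hγ2 : γ^2 ≤ 1) (c : ℂ) (r C : ℝ)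
    (hc : ‖c‖ ≤ C) (hr0 : 0 ≤ r) (hrC : r ≤ C) (hz4 : MemLp z 4 μ)
    (hmean : ∫ x, z x ∂μ = 0) (habs2 : ∫ x, ‖z x‖^2 ∂μ = 1) (habs4 : ∫ x, ‖z x‖^4 ∂μ = 2) :
    variance (fun x => chW η γ c r (z x)) μ ≤ 8*C^3 + 2*C^2 := by
  rw [variance_eq_sub (chW_memℒp η γ c r hz4)]
  simp only [Pi.pow_apply]
  rw [chW_integral η γ c r hz4 hmean habs2]
  have Ig2 : Integrable (fun x => (‖z x‖^2 - 1)^2) μ :=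
    ((ch_normsq_memℒp hz4).sub (memLp_const 1)).integrable_sq
  have Ig : Integrable (fun x => 8*C^3*‖z x‖^2 + 2*C^2*(‖z x‖^2 - 1)^2) μ :=
    ((ch_int_sq hz4).const_mul _).add (Ig2.const_mul _)
  have hmono : ∫ x, (chW η γ c r (z x))^2 ∂μ
      ≤ ∫ x, (8*C^3*‖z x‖^2 + 2*C^2*(‖z x‖^2 - 1)^2) ∂μ := by
    refine integral_mono_of_nonneg (ae_of_all _ fun x => sq_nonneg _) Ig (ae_of_all _ fun x => ?_)
    exact chW_pointwise_bound η γ hη2 hγ2 c r C hc hr0 hrC (z x)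
  have heq : ∫ x, (8*C^3*‖z x‖^2 + 2*C^2*(‖z x‖^2 - 1)^2) ∂μ = 8*C^3 + 2*C^2 := by
    rw [integral_add ((ch_int_sq hz4).const_mul _) (Ig2.const_mul _), integral_const_mul,
      integral_const_mul, habs2, ch_int_dev_sq hz4 habs2 habs4]
    ring
  calc ∫ x, (chW η γ c r (z x))^2 ∂μ - 0^2 = ∫ x, (chW η γ c r (z x))^2 ∂μ := by ring
    _ ≤ 8*C^3 + 2*C^2 := heq ▸ hmono
end moments



/-- Channel hardening (Corollary 1): for a family of `M`-dimensional
Weichselberger Ricean channels whose coupling coefficients `ω^(M)_m` and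
LoS-projection entries `|v^(M)_m|` are uniformly bounded, the normalized
channel gain `‖h^(M)‖²/M` converges to `1` in probability as `M → ∞`. -/
theorem channel_hardening
    {Ω : Type*} [MeasurableSpace Ω] {μ : Measure Ω} [IsProbabilityMeasure μ]
    (η γ : ℝ) (hη : 0 ≤ η) (hγ : 0 ≤ γ) (hηγ : η ^ 2 + γ ^ 2 = 1)
    (hbar : (M : ℕ) → Fin M → ℂ)
    (U : (M : ℕ) → Matrix (Fin M) (Fin M) ℂ)
    (ω : (M : ℕ) → Fin M → ℝ)
    (z : (M : ℕ) → Ω → Fin M → ℂ)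
    (h : (M : ℕ) → Ω → Fin M → ℂ)
    (v : (M : ℕ) → Fin M → ℂ)
    (C : ℝ)
    (hbar_norm : ∀ M, ∑ i, ‖hbar M i‖ ^ 2 = (M : ℝ))
    (hU : ∀ M, U M ∈ Matrix.unitaryGroup (Fin M) ℂ)
    (hω_nonneg : ∀ M m, 0 ≤ ω M m) (hω_sum : ∀ M, ∑ m, ω M m = (M : ℝ))
    (hz_meas : ∀ M m, Measurable fun x => z M x m)
    (hz_indep : ∀ M, iIndepFun (fun m x => z M x m) μ)
    (hz_L4 : ∀ M m, MemLp (fun x => z M x m) 4 μ)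
    (hz_mean : ∀ M m, ∫ x, z M x m ∂μ = 0)
    (hz_sq : ∀ M m, ∫ x, (z M x m) ^ 2 ∂μ = 0)
    (hz_abs2 : ∀ M m, ∫ x, ‖z M x m‖ ^ 2 ∂μ = 1)
    (hz_abs4 : ∀ M m, ∫ x, ‖z M x m‖ ^ 4 ∂μ = 2)
    (hh : ∀ M x, h M x = fun i =>
      (η : ℂ) * hbar M i
        + (γ : ℂ) * ((U M).mulVec fun m => (Real.sqrt (ω M m) : ℂ) * z M x m) i)
    (hv : ∀ M, v M = (U M)ᴴ.mulVec (hbar M))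
    (hC_ω : ∀ M, ∀ m : Fin M, ω M m ≤ C)
    (hC_v : ∀ M, ∀ m : Fin M, ‖v M m‖ ≤ C) :
    TendstoInMeasure μ (fun M x => (∑ i, ‖h M x i‖ ^ 2) / M)
      atTop (fun _ => (1 : ℝ)) := by
  have hC0 : 0 ≤ C := le_trans (hω_nonneg 1 0) (hC_ω 1 0)
  have hη2 : η^2 ≤ 1 := by nlinarith [sq_nonneg γ]
  have hγ2 : γ^2 ≤ 1 := by nlinarith [sq_nonneg η]
  set K := 8*C^3 + 2*C^2 with hK
  have hK0 : 0 ≤ K := by positivity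
  -- the identity ‖h‖² = M + S
  have ident : ∀ M x, ∑ i, ‖h M x i‖^2
      = (M : ℝ) + ∑ m, chW η γ (v M m) (ω M m) (z M x m) := by
    intro M x
    rw [hh M x]
    have base := ch_identity η γ (hbar M) (U M) (hU M)
      (fun m => (Real.sqrt (ω M m) : ℂ) * z M x m)
    rw [hbar_norm M] at base
    have hwnorm : ∀ m : Fin M, ‖(Real.sqrt (ω M m) : ℂ) * z M x m‖^2
        = ω M m * ‖z M x m‖^2 := by
      intro m
      rw [norm_mul, mul_pow, Complex.norm_real, Real.norm_eq_abs, sq_abs,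
        Real.sq_sqrt (hω_nonneg M m)]
    have hsum : ∑ m, chW η γ (v M m) (ω M m) (z M x m)
        = 2*η*γ * ∑ m, ((starRingEnd ℂ) (((U M)ᴴ.mulVec (hbar M)) m)
            * ((Real.sqrt (ω M m) : ℂ) * z M x m)).re
          + γ^2 * ∑ m, ω M m * ‖z M x m‖^2 - γ^2 * M := by
      unfold chW
      rw [Finset.sum_add_distrib, ← Finset.mul_sum, ← Finset.mul_sum, hv M]
      have e1 : ∑ m, ω M m * (‖z M x m‖^2 - 1)
          = ∑ m, ω M m * ‖z M x m‖^2 - (M:ℝ) := by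
        rw [← hω_sum M, ← Finset.sum_sub_distrib]
        exact Finset.sum_congr rfl fun m _ => by ring
      have e2 : ∑ m, ((starRingEnd ℂ) (((U M)ᴴ.mulVec (hbar M)) m)
            * ((Real.sqrt (ω M m) : ℂ) * z M x m)).re
          = ∑ m, ((starRingEnd ℂ) (((U M)ᴴ.mulVec (hbar M)) m)
            * (Real.sqrt (ω M m) : ℂ) * z M x m).re :=
        Finset.sum_congr rfl fun m _ => by rw [mul_assoc]
      rw [e1, ← e2]
      ring
    rw [base, hsum]
    simp only [hwnorm]
    linear_combination (M : ℝ) * hηγ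
  -- per-summand facts
  have hWmem : ∀ M (m : Fin M), MemLp (fun x => chW η γ (v M m) (ω M m) (z M x m)) 2 μ :=
    fun M m => chW_memℒp η γ _ _ (hz_L4 M m)
  have hWint : ∀ M (m : Fin M), ∫ x, chW η γ (v M m) (ω M m) (z M x m) ∂μ = 0 :=
    fun M m => chW_integral η γ _ _ (hz_L4 M m) (hz_mean M m) (hz_abs2 M m)
  have hWvar : ∀ M (m : Fin M), variance (fun x => chW η γ (v M m) (ω M m) (z M x m)) μ ≤ K :=
    fun M m => chW_variance_le η γ hη2 hγ2 _ _ C (hC_v M m) (hω_nonneg M m) (hC_ω M m)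
      (hz_L4 M m) (hz_mean M m) (hz_abs2 M m) (hz_abs4 M m)
  have hWindep : ∀ M, iIndepFun
      (fun (m : Fin M) x => chW η γ (v M m) (ω M m) (z M x m)) μ :=
    fun M => (hz_indep M).comp (fun m u => chW η γ (v M m) (ω M m) u)
      (fun m => (chW_continuous η γ (v M m) (ω M m)).measurable)
  -- facts about the sum S
  have hSfun : ∀ M, (fun x => ∑ m : Fin M, chW η γ (v M m) (ω M m) (z M x m))
      = ∑ m : Fin M, (fun x => chW η γ (v M m) (ω M m) (z M x m)) := by
    intro M; funext x; rw [Finset.sum_apply]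
  have hSmem : ∀ M, MemLp (fun x => ∑ m : Fin M, chW η γ (v M m) (ω M m) (z M x m)) 2 μ := by
    intro M; rw [hSfun M]
    exact memLp_finset_sum' _ (fun m _ => hWmem M m)
  have hSint : ∀ M, ∫ x, (∑ m : Fin M, chW η γ (v M m) (ω M m) (z M x m)) ∂μ = 0 := by
    intro M
    rw [integral_finset_sum _ (fun m _ => (hWmem M m).integrable one_le_two)]
    simp [hWint M]
  have hSvar : ∀ M, variance (fun x => ∑ m : Fin M, chW η γ (v M m) (ω M m) (z M x m)) μ
      ≤ M * K := by
    intro M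
    rw [hSfun M, IndepFun.variance_sum (fun m _ => hWmem M m)
      (fun i _ j _ hij => (hWindep M).indepFun hij)]
    calc ∑ m : Fin M, variance (fun x => chW η γ (v M m) (ω M m) (z M x m)) μ
        ≤ ∑ _m : Fin M, K := Finset.sum_le_sum (fun m _ => hWvar M m)
      _ = M * K := by rw [Finset.sum_const, Finset.card_univ, Fintype.card_fin, nsmul_eq_mul]
  -- Chebyshev bound, for M ≥ 1
  rw [tendstoInMeasure_iff_dist]
  intro ε hε
  have key : ∀ M : ℕ, 1 ≤ M →
      μ {x | ε ≤ dist ((∑ i, ‖h M x i‖^2) / M) 1} ≤ ENNReal.ofReal (K / (ε^2 * M)) := by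
    intro M hM
    have hMpos : (0:ℝ) < M := by exact_mod_cast hM
    have hset : {x | ε ≤ dist ((∑ i, ‖h M x i‖^2) / M) 1}
        = {x | ε * M ≤ |(∑ m : Fin M, chW η γ (v M m) (ω M m) (z M x m))
            - ∫ x', (∑ m : Fin M, chW η γ (v M m) (ω M m) (z M x' m)) ∂μ|} := by
      ext x
      simp only [Set.mem_setOf_eq, Real.dist_eq, hSint M, sub_zero, ident M x]
      have e : ((M:ℝ) + ∑ m : Fin M, chW η γ (v M m) (ω M m) (z M x m)) / M - 1
          = (∑ m : Fin M, chW η γ (v M m) (ω M m) (z M x m)) / M := by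
        field_simp
        ring
      rw [e, abs_div, abs_of_pos hMpos, le_div_iff₀ hMpos]
    rw [hset]
    calc μ _ ≤ ENNReal.ofReal
          (variance (fun x => ∑ m : Fin M, chW η γ (v M m) (ω M m) (z M x m)) μ / (ε*M)^2) :=
            meas_ge_le_variance_div_sq (hSmem M) (by positivity)
      _ ≤ ENNReal.ofReal (K / (ε^2 * M)) := by
          apply ENNReal.ofReal_le_ofReal
          have h1 : variance (fun x => ∑ m : Fin M, chW η γ (v M m) (ω M m) (z M x m)) μ / (ε*M)^2
              ≤ (M*K) / (ε*M)^2 := by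
            apply div_le_div_of_nonneg_right (hSvar M) (by positivity)
          calc variance _ μ / (ε*M)^2 ≤ (M*K) / (ε*M)^2 := h1
            _ = K / (ε^2 * M) := by field_simp
  -- squeeze
  have hub : Tendsto (fun M : ℕ => ENNReal.ofReal (K / (ε^2 * M))) atTop (𝓝 0) := by
    have h1 : Tendsto (fun M : ℕ => K / ε^2 / (M:ℝ)) atTop (𝓝 0) :=
      tendsto_const_div_atTop_nhds_zero_nat _
    have h3 := (ENNReal.continuous_ofReal.tendsto 0).comp h1
    simp only [Function.comp_def, ENNReal.ofReal_zero, div_div] at h3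
    exact h3
  refine tendsto_of_tendsto_of_tendsto_of_le_of_le' tendsto_const_nhds hub
    (Eventually.of_forall fun M => zero_le) ?_
  filter_upwards [eventually_ge_atTop 1] with M hM
  exact key M hM
end
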